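/- Let N > 0, Q > 0, ū ≥ 0, V₁ > ū, and define the 5G operator's profit under uniformly distributed congestion sensitivity by π̄₁(p) = N·p·min(1, √((V₁ − ū − p)Q/N)) for 0 ≤ p ≤ V₁ − ū and π̄₁(p) = 0 for p > V₁ − ū. If Q ≥ 3N/(V₁ − ū), then for every p ≥ 0 one has π̄₁(p) ≤ π̄₁(V₁ − ū − N/Q), and π̄₁(V₁ − ū − N/Q) = N·(V₁ − ū − N/Q). -/

import Mathlib

/-- Proposition 1 of the paper (uniform distribution, large-capacity regime
`Q ≥ 3N/(V₁ − ū)`): the benchmark 5G profit is maximized at price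
`V₁ − ū − N/Q`, with optimal profit `N·(V₁ − ū − N/Q)`. -/
theorem stmt_5 (N Q ubar V₁ : ℝ) (π : ℝ → ℝ)
    (hN : 0 < N) (hQ : 0 < Q) (hubar : 0 ≤ ubar) (hV : ubar < V₁)
    (hπ₁ : ∀ p, 0 ≤ p → p ≤ V₁ - ubar →
      π p = N * p * min 1 (Real.sqrt ((V₁ - ubar - p) * Q / N)))
    (hπ₂ : ∀ p, V₁ - ubar < p → π p = 0)
    (hQlarge : 3 * N / (V₁ - ubar) ≤ Q) :
    (∀ p, 0 ≤ p → π p ≤ π (V₁ - ubar - N / Q)) ∧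
      π (V₁ - ubar - N / Q) = N * (V₁ - ubar - N / Q) := by
  set V := V₁ - ubar with hVdef
  have hV0 : 0 < V := by simp [hVdef]; linarith
  set a := N / Q with hadef
  have ha : 0 < a := div_pos hN hQ
  have haV : 3 * a ≤ V := by
    rw [div_le_iff₀ hV0] at hQlarge
    rw [hadef, show (3:ℝ) * (N / Q) = 3 * N / Q by ring, div_le_iff₀ hQ]
    nlinarith
  have hp0 : 0 ≤ V - a := by linarith
  have hpV : V - a ≤ V := by linarith
  have haQ : (V - (V - a)) * Q / N = 1 := by
    rw [sub_sub_cancel, hadef, div_mul_cancel₀ N hQ.ne', div_self hN.ne']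
  have hπstar : π (V - a) = N * (V - a) := by
    rw [hπ₁ _ hp0 hpV, haQ, Real.sqrt_one, min_self, mul_one]
  refine ⟨fun p hp => ?_, hπstar⟩
  rw [hπstar]
  by_cases hple : p ≤ V
  · rw [hπ₁ p hp hple]
    set s := Real.sqrt ((V - p) * Q / N) with hsdef
    have hs0 : 0 ≤ s := Real.sqrt_nonneg _
    have hs2 : s ^ 2 = (V - p) * Q / N := by
      rw [hsdef, Real.sq_sqrt]
      apply div_nonneg (mul_nonneg (by linarith) hQ.le) hN.le
    by_cases hps : p ≤ V - a
    · calc N * p * min 1 s ≤ N * p * 1 :=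
            mul_le_mul_of_nonneg_left (min_le_left 1 s) (by positivity)
        _ ≤ N * (V - a) := by nlinarith
    · push_neg at hps
      have hs1 : s ≤ 1 := by
        rw [hsdef]
        rw [show (1:ℝ) = Real.sqrt 1 by rw [Real.sqrt_one]]
        apply Real.sqrt_le_sqrt
        rw [div_le_one hN]
        have : (V - p) ≤ a := by linarith
        have haQN : a * Q = N := by rw [hadef, div_mul_cancel₀ N hQ.ne']
        nlinarith
      have hmin : min 1 s = s := min_eq_right hs1
      rw [hmin]
      have hpeq : p = V - s ^ 2 * a := by
        have : s ^ 2 * N = (V - p) * Q := by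
          field_simp at hs2; linarith
        have h2 : s ^ 2 * a = V - p := by
          rw [hadef, ← mul_div_assoc, this, mul_div_assoc, div_self hQ.ne', mul_one]
        linarith
      rw [hpeq]
      have h1 : 0 ≤ V - a * (1 + s + s ^ 2) := by nlinarith
      have key : (V - s ^ 2 * a) * s ≤ V - a := by
        nlinarith [mul_nonneg (sub_nonneg.mpr hs1) h1]
      nlinarith
  · push_neg at hple
    rw [hπ₂ p hple]
    positivity
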